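/- Let G', G'' be generator matrices over 𝔽₂ with coset spectra D', D'', and let G = [[G', 0],[P, G'']] where P = G''_{[N''],Γ'} for a column subset Γ' of size N' ≤ N''. Then the coset spectrum D of G satisfies: D_i = D'_i for all i ≤ N', and for i > N', D_i ≤ min(D''_{i-N'} + N', 2·D''_{i-N'}). -/

import Mathlib

open Matrix

section Helpers

variable {α β M : Type*} [Fintype α] [Fintype β] [DecidableEq M]

lemma hammingDist_sumElim (a c : α → M) (b d : β → M) :
    hammingDist (Sum.elim a b) (Sum.elim c d) = hammingDist a c + hammingDist b d := by
  classical
  rw [hammingDist, ← Finset.card_toLeft_add_card_toRight]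
  congr 1
  · rw [hammingDist]; congr 1; ext x; simp
  · rw [hammingDist]; congr 1; ext x; simp

lemma hammingDist_comp_equiv (σ : α ≃ β) (x y : β → M) :
    hammingDist (x ∘ σ) (y ∘ σ) = hammingDist x y := by
  classical
  rw [hammingDist, hammingDist]
  apply Finset.card_bij (fun a _ => σ a)
  · intro a ha; simpa using (by simpa using ha : x (σ a) ≠ y (σ a))
  · intro a _ b _ h; exact σ.injective h
  · intro b hb
    exact ⟨σ.symm b, by simpa using (by simpa using hb : x b ≠ y b), by simp⟩

lemma hammingDist_comp_inj (γ : α → β) (hγ : Function.Injective γ) (x y : β → M) :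
    hammingDist (x ∘ γ) (y ∘ γ) ≤ hammingDist x y := by
  classical
  rw [hammingDist, hammingDist]
  apply Finset.card_le_card_of_injOn γ
  · intro a ha; simpa using (by simpa using ha : x (γ a) ≠ y (γ a))
  · exact hγ.injOn

lemma hammingDist_add_right_cancel [AddCommGroup M] (p u : α → M) :
    hammingDist (u + p) u = hammingDist p 0 := by
  rw [hammingDist_eq_hammingNorm, hammingDist_eq_hammingNorm]; congr 1; abel

end Helpers

/-- Embedding `v ↦ (v, 0)` composed with the `finSumFinEquiv` reindexing. -/
def leftStitch (N' N'' : ℕ) :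
    (Fin N' → ZMod 2) →ₗ[ZMod 2] (Fin (N' + N'') → ZMod 2) where
  toFun v := Sum.elim v 0 ∘ ⇑(finSumFinEquiv (m := N') (n := N'')).symm
  map_add' u v := by
    funext c
    simp only [Function.comp_apply, Pi.add_apply]
    rcases finSumFinEquiv.symm c with s | s <;> simp
  map_smul' r v := by
    funext c
    simp only [Function.comp_apply, Pi.smul_apply, RingHom.id_apply]
    rcases finSumFinEquiv.symm c with s | s <;> simp

/-- Embedding `v ↦ (v ∘ γ, v)` composed with the `finSumFinEquiv` reindexing. -/
def rightStitch (N' N'' : ℕ) (γ : Fin N' → Fin N'') :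
    (Fin N'' → ZMod 2) →ₗ[ZMod 2] (Fin (N' + N'') → ZMod 2) where
  toFun v := Sum.elim (v ∘ γ) v ∘ ⇑(finSumFinEquiv (m := N') (n := N'')).symm
  map_add' u v := by
    funext c
    simp only [Function.comp_apply, Pi.add_apply]
    rcases finSumFinEquiv.symm c with s | s <;> simp
  map_smul' r v := by
    funext c
    simp only [Function.comp_apply, Pi.smul_apply, RingHom.id_apply]
    rcases finSumFinEquiv.symm c with s | s <;> simp

/-- The coset spectrum entry `D_i` of a matrix `G` over `𝔽₂`: the minimum Hamming
distance from the `i`-th row to the span of the later rows. -/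
noncomputable def cosetD {k n : ℕ} (G : Matrix (Fin k) (Fin n) (ZMod 2)) (i : Fin k) : ℕ :=
  sInf ((fun w => hammingDist (G i) w) ''
    ((Submodule.span (ZMod 2) {v : Fin n → ZMod 2 | ∃ j, i < j ∧ v = G j} :
        Submodule (ZMod 2) (Fin n → ZMod 2)) : Set (Fin n → ZMod 2)))

/-- Lemma 3 (right-stitched polar codes, `N' ≤ N''`): with
`G = [[G',0],[P,G'']]` where `P = G''_{·,Γ'}` selects `N'` columns of `G''`,
the coset spectrum of `G` satisfies `D_i = D'_i` for `i ≤ N'` and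
`D_i ≤ min(D''_{i-N'} + N', 2·D''_{i-N'})` for `i > N'`. -/
theorem right_stitched_coset_spectrum_le (N' N'' : ℕ) (hle : N' ≤ N'')
    (G' : Matrix (Fin N') (Fin N') (ZMod 2))
    (G'' : Matrix (Fin N'') (Fin N'') (ZMod 2))
    (γ : Fin N' → Fin N'') (hγ : Function.Injective γ) :
    let P : Matrix (Fin N'') (Fin N') (ZMod 2) := fun i j => G'' i (γ j)
    let G : Matrix (Fin (N' + N'')) (Fin (N' + N'')) (ZMod 2) :=
      Matrix.reindex finSumFinEquiv finSumFinEquiv (Matrix.fromBlocks G' 0 P G'')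
    (∀ i : Fin N', cosetD G (Fin.castAdd N'' i) = cosetD G' i) ∧
    (∀ i : Fin N'', cosetD G (Fin.natAdd N' i) ≤
      min (cosetD G'' i + N') (2 * cosetD G'' i)) := by
  intro P G
  have hG : G = Matrix.reindex finSumFinEquiv finSumFinEquiv (Matrix.fromBlocks G' 0 P G'') := rfl
  -- row descriptions
  have hrow1 : ∀ j : Fin N',
      G (Fin.castAdd N'' j) = Sum.elim (G' j) 0 ∘ ⇑(finSumFinEquiv (m := N') (n := N'')).symm := by
    intro j; funext c
    rw [hG]
    simp only [Matrix.reindex_apply, Matrix.submatrix_apply, finSumFinEquiv_symm_apply_castAdd,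
      Function.comp_apply]
    rcases finSumFinEquiv.symm c with s | s <;> simp
  have hrow2 : ∀ j : Fin N'',
      G (Fin.natAdd N' j) = Sum.elim (G'' j ∘ γ) (G'' j) ∘
        ⇑(finSumFinEquiv (m := N') (n := N'')).symm := by
    intro j; funext c
    rw [hG]
    simp only [Matrix.reindex_apply, Matrix.submatrix_apply, finSumFinEquiv_symm_apply_natAdd,
      Function.comp_apply]
    rcases finSumFinEquiv.symm c with s | s <;> simp [P] <;> rfl
  have hrow1' : ∀ j : Fin N', G (Fin.castAdd N'' j) = leftStitch N' N'' (G' j) := fun j => hrow1 j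
  have hrow2' : ∀ j : Fin N'', G (Fin.natAdd N' j) = rightStitch N' N'' γ (G'' j) := fun j =>
    hrow2 j
  constructor
  · -- first part: equality for i ≤ N'
    intro i
    apply le_antisymm
    · -- cosetD G ≤ cosetD G'
      obtain ⟨w, hw, hwd⟩ : ∃ w ∈ (Submodule.span (ZMod 2)
          {v : Fin N' → ZMod 2 | ∃ j, i < j ∧ v = G' j}), hammingDist (G' i) w = cosetD G' i := by
        have hne : ((fun w => hammingDist (G' i) w) ''
            ((Submodule.span (ZMod 2) {v : Fin N' → ZMod 2 | ∃ j, i < j ∧ v = G' j} :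
              Submodule (ZMod 2) (Fin N' → ZMod 2)) : Set (Fin N' → ZMod 2))).Nonempty :=
          ⟨_, ⟨0, Submodule.zero_mem _, rfl⟩⟩
        obtain ⟨w, hw, h⟩ := Nat.sInf_mem hne
        exact ⟨w, hw, h⟩
      have hmem : leftStitch N' N'' w ∈ Submodule.span (ZMod 2)
          {v : Fin (N' + N'') → ZMod 2 | ∃ j, Fin.castAdd N'' i < j ∧ v = G j} := by
        have hsub : (leftStitch N' N'') ''
            {v : Fin N' → ZMod 2 | ∃ j, i < j ∧ v = G' j} ⊆
            {v : Fin (N' + N'') → ZMod 2 | ∃ j, Fin.castAdd N'' i < j ∧ v = G j} := by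
          rintro v ⟨u, ⟨j, hij, rfl⟩, rfl⟩
          refine ⟨Fin.castAdd N'' j, ?_, (hrow1' j).symm⟩
          rw [Fin.lt_def]
          simpa only [Fin.coe_castAdd] using Fin.lt_def.mp hij
        have hmaple : Submodule.map (leftStitch N' N'')
            (Submodule.span (ZMod 2) {v : Fin N' → ZMod 2 | ∃ j, i < j ∧ v = G' j}) ≤
            Submodule.span (ZMod 2)
              {v : Fin (N' + N'') → ZMod 2 | ∃ j, Fin.castAdd N'' i < j ∧ v = G j} := by
          rw [Submodule.map_span]
          exact Submodule.span_mono hsub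
        exact hmaple (Submodule.mem_map_of_mem hw)
      have hmem' : hammingDist (G (Fin.castAdd N'' i)) (leftStitch N' N'' w) ∈
          ((fun w => hammingDist (G (Fin.castAdd N'' i)) w) ''
            ((Submodule.span (ZMod 2)
                {v : Fin (N' + N'') → ZMod 2 | ∃ j, Fin.castAdd N'' i < j ∧ v = G j} :
              Submodule (ZMod 2) (Fin (N' + N'') → ZMod 2)) :
              Set (Fin (N' + N'') → ZMod 2))) := ⟨_, hmem, rfl⟩
      calc cosetD G (Fin.castAdd N'' i) ≤ hammingDist (G (Fin.castAdd N'' i))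
            (leftStitch N' N'' w) := Nat.sInf_le hmem'
        _ = cosetD G' i := by
            rw [hrow1 i]
            show hammingDist (Sum.elim (G' i) 0 ∘ ⇑finSumFinEquiv.symm)
              (Sum.elim w 0 ∘ ⇑finSumFinEquiv.symm) = _
            rw [hammingDist_comp_equiv, hammingDist_sumElim, hammingDist_self, hwd, add_zero]
    · -- cosetD G' ≤ cosetD G
      have hne : ((fun w => hammingDist (G (Fin.castAdd N'' i)) w) ''
          ((Submodule.span (ZMod 2)
              {v : Fin (N' + N'') → ZMod 2 | ∃ j, Fin.castAdd N'' i < j ∧ v = G j} :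
            Submodule (ZMod 2) (Fin (N' + N'') → ZMod 2)) :
            Set (Fin (N' + N'') → ZMod 2))).Nonempty :=
        ⟨_, ⟨0, Submodule.zero_mem _, rfl⟩⟩
      refine le_csInf hne ?_
      rintro b ⟨w, hwspan, rfl⟩
      -- decompose w
      have hK : w ∈ Submodule.map (leftStitch N' N'')
            (Submodule.span (ZMod 2) {v : Fin N' → ZMod 2 | ∃ j, i < j ∧ v = G' j}) ⊔
          Submodule.map (rightStitch N' N'' γ) ⊤ := by
        refine Submodule.span_le.mpr ?_ hwspan
        rintro v ⟨j, hij, rfl⟩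
        rcases h : finSumFinEquiv.symm j with j' | j''
        · have hj : j = Fin.castAdd N'' j' := by
            rw [← finSumFinEquiv.apply_symm_apply j, h, finSumFinEquiv_apply_left]
          subst hj
          rw [hrow1' j']
          have hij' : i < j' := by
            rw [Fin.lt_def] at hij ⊢
            simpa only [Fin.coe_castAdd] using hij
          exact Submodule.mem_sup_left (Submodule.mem_map_of_mem
            (Submodule.subset_span ⟨j', hij', rfl⟩))
        · have hj : j = Fin.natAdd N' j'' := by
            rw [← finSumFinEquiv.apply_symm_apply j, h, finSumFinEquiv_apply_right]
          subst hj
          rw [hrow2' j'']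
          exact Submodule.mem_sup_right (Submodule.mem_map_of_mem trivial)
      rw [Submodule.mem_sup] at hK
      obtain ⟨y, hy, z, hz, rfl⟩ := hK
      obtain ⟨u, hu, rfl⟩ := hy
      obtain ⟨zz, -, rfl⟩ := hz
      have hsum : leftStitch N' N'' u + rightStitch N' N'' γ zz =
          Sum.elim (u + zz ∘ γ) zz ∘ ⇑(finSumFinEquiv (m := N') (n := N'')).symm := by
        funext c
        simp only [leftStitch, rightStitch, LinearMap.coe_mk, AddHom.coe_mk, Pi.add_apply,
          Function.comp_apply]
        rcases finSumFinEquiv.symm c with s | s <;> simp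
      show cosetD G' i ≤ hammingDist (G (Fin.castAdd N'' i))
        (leftStitch N' N'' u + rightStitch N' N'' γ zz)
      rw [hsum, hrow1 i]
      rw [hammingDist_comp_equiv, hammingDist_sumElim]
      have h1 : cosetD G' i ≤ hammingDist (G' i) u := Nat.sInf_le ⟨u, hu, rfl⟩
      have h2 : hammingDist (G' i) u ≤ hammingDist (G' i) (u + zz ∘ γ) +
          hammingDist (u + zz ∘ γ) u := hammingDist_triangle _ _ _
      have h3 : hammingDist (u + zz ∘ γ) u = hammingDist (zz ∘ γ) 0 :=
        hammingDist_add_right_cancel _ _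
      have h4 : hammingDist (zz ∘ γ) 0 ≤ hammingDist zz 0 := by
        simpa using hammingDist_comp_inj γ hγ zz 0
      have h5 : hammingDist (0 : Fin N'' → ZMod 2) zz = hammingDist zz 0 :=
        hammingDist_comm _ _
      omega
  · -- second part
    intro i
    obtain ⟨w, hw, hwd⟩ : ∃ w ∈ (Submodule.span (ZMod 2)
        {v : Fin N'' → ZMod 2 | ∃ j, i < j ∧ v = G'' j}), hammingDist (G'' i) w = cosetD G'' i := by
      have hne : ((fun w => hammingDist (G'' i) w) ''
          ((Submodule.span (ZMod 2) {v : Fin N'' → ZMod 2 | ∃ j, i < j ∧ v = G'' j} :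
            Submodule (ZMod 2) (Fin N'' → ZMod 2)) : Set (Fin N'' → ZMod 2))).Nonempty :=
        ⟨_, ⟨0, Submodule.zero_mem _, rfl⟩⟩
      obtain ⟨w, hw, h⟩ := Nat.sInf_mem hne
      exact ⟨w, hw, h⟩
    have hmem : rightStitch N' N'' γ w ∈ Submodule.span (ZMod 2)
        {v : Fin (N' + N'') → ZMod 2 | ∃ j, Fin.natAdd N' i < j ∧ v = G j} := by
      have hsub : (rightStitch N' N'' γ) ''
          {v : Fin N'' → ZMod 2 | ∃ j, i < j ∧ v = G'' j} ⊆
          {v : Fin (N' + N'') → ZMod 2 | ∃ j, Fin.natAdd N' i < j ∧ v = G j} := by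
        rintro v ⟨u, ⟨j, hij, rfl⟩, rfl⟩
        refine ⟨Fin.natAdd N' j, ?_, (hrow2' j).symm⟩
        rw [Fin.lt_def]
        simp only [Fin.coe_natAdd]
        exact Nat.add_lt_add_left hij N'
      have hmaple : Submodule.map (rightStitch N' N'' γ)
          (Submodule.span (ZMod 2) {v : Fin N'' → ZMod 2 | ∃ j, i < j ∧ v = G'' j}) ≤
          Submodule.span (ZMod 2)
            {v : Fin (N' + N'') → ZMod 2 | ∃ j, Fin.natAdd N' i < j ∧ v = G j} := by
        rw [Submodule.map_span]
        exact Submodule.span_mono hsub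
      exact hmaple (Submodule.mem_map_of_mem hw)
    have hmem' : hammingDist (G (Fin.natAdd N' i)) (rightStitch N' N'' γ w) ∈
        ((fun w => hammingDist (G (Fin.natAdd N' i)) w) ''
          ((Submodule.span (ZMod 2)
              {v : Fin (N' + N'') → ZMod 2 | ∃ j, Fin.natAdd N' i < j ∧ v = G j} :
            Submodule (ZMod 2) (Fin (N' + N'') → ZMod 2)) :
            Set (Fin (N' + N'') → ZMod 2))) := ⟨_, hmem, rfl⟩
    have hb : cosetD G (Fin.natAdd N' i) ≤
        hammingDist (G (Fin.natAdd N' i)) (rightStitch N' N'' γ w) :=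
      Nat.sInf_le hmem'
    have hdist : hammingDist (G (Fin.natAdd N' i)) (rightStitch N' N'' γ w) =
        hammingDist (G'' i ∘ γ) (w ∘ γ) + hammingDist (G'' i) w := by
      rw [hrow2 i]
      show hammingDist (Sum.elim (G'' i ∘ γ) (G'' i) ∘ ⇑finSumFinEquiv.symm)
        (Sum.elim (w ∘ γ) w ∘ ⇑finSumFinEquiv.symm) = _
      rw [hammingDist_comp_equiv, hammingDist_sumElim]
    have hγle : hammingDist (G'' i ∘ γ) (w ∘ γ) ≤ hammingDist (G'' i) w :=
      hammingDist_comp_inj γ hγ _ _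
    have hγN : hammingDist (G'' i ∘ γ) (w ∘ γ) ≤ N' := by
      simpa using (hammingDist_le_card_fintype :
        hammingDist (G'' i ∘ γ) (w ∘ γ) ≤ Fintype.card (Fin N'))
    rw [hdist] at hb
    omega
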